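/- Let G be a perfect group, let N be a subgroup of G contained in the center of G (hence normal), and let m ∈ G. If the image of m in the quotient G/N normally generates G/N (i.e., Subgroup.normalClosure {QuotientGroup.mk m} = ⊤ in G ⧸ N), then m normally generates G (i.e., Subgroup.normalClosure {m} = ⊤ in G). -/

import Mathlib

open scoped Pointwise commutatorElement

/-- If G is a perfect group, N a central subgroup, and the image of m in G/N
normally generates G/N, then m normally generates G. -/
theorem normally_generates_of_quotient_by_central
    (G : Type*) [Group G]
    (hG : ⁅(⊤ : Subgroup G), (⊤ : Subgroup G)⁆ = ⊤)
    (N : Subgroup G) (hN : N ≤ Subgroup.center G) [N.Normal]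
    (m : G)
    (h : Subgroup.normalClosure {(QuotientGroup.mk m : G ⧸ N)} = ⊤) :
    Subgroup.normalClosure {m} = ⊤ := by
  set M := Subgroup.normalClosure {m} with hM
  have hMN : M ⊔ N = ⊤ := by
    have hmap : Subgroup.map (QuotientGroup.mk' N) M = ⊤ := by
      rw [hM, Subgroup.map_normalClosure _ _ (QuotientGroup.mk'_surjective N),
        Set.image_singleton]
      exact h
    have := congrArg (Subgroup.comap (QuotientGroup.mk' N)) hmap
    rwa [Subgroup.comap_map_eq, QuotientGroup.ker_mk', Subgroup.comap_top] at this
  rw [eq_top_iff, ← hG]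
  rw [Subgroup.commutator_le]
  intro g _ k _
  have hg : g ∈ ((M : Set G) * (N : Set G)) := by
    rw [← Subgroup.mul_normal, hMN]; trivial
  obtain ⟨a, ha, n, hn, rfl⟩ := hg
  have hcomm : ∀ x : G, n * x = x * n := fun x => (hN hn).comm x
  have : ⁅a * n, k⁆ = ⁅a, k⁆ := by
    simp only [commutatorElement_def, mul_inv_rev]
    rw [mul_assoc a n, hcomm k]
    group
  rw [this]
  have hMnormal : M.Normal := Subgroup.normalClosure_normal
  have : a * (k * a⁻¹ * k⁻¹) ∈ M := M.mul_mem ha (by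
    have := hMnormal.conj_mem a⁻¹ (M.inv_mem ha) k
    simpa [mul_assoc] using this)
  simpa [commutatorElement_def, mul_assoc] using this
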